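/- Angle bound for subgradients of ℓp-norms: for any p ∈ [1,∞) ∪ {∞} and any z ∈ ℝ^d with ‖z‖_p = 1, every subgradient u of the ℓp-norm at z satisfies ⟨u, z⟩ / (‖u‖_2 ‖z‖_2) ≥ 1/√d; consequently the (Euclidean) angle between u and z is at most π/2 - 1/√d. -/

import Mathlib

open scoped ENNReal

noncomputable def pnorm {d : ℕ} (p : ℝ≥0∞) [Fact (1 ≤ p)] (x : Fin d → ℝ) : ℝ :=
  ‖(WithLp.equiv p (Fin d → ℝ)).symm x‖

def Hp {d : ℕ} (p : ℝ≥0∞) [Fact (1 ≤ p)] (x v : Fin d → ℝ) : Set (Fin d → ℝ) :=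
  {z | ∀ ε : ℝ, 0 < ε → pnorm p (x - z) ≤ pnorm p (x - ε • v - z)}

section helpers
variable {d : ℕ} (p : ℝ≥0∞) [Fact (1 ≤ p)]

lemma pnorm_zero : pnorm p (0 : Fin d → ℝ) = 0 := by
  simp [pnorm, WithLp.equiv_symm_apply]

lemma pnorm_smul (c : ℝ) (x : Fin d → ℝ) : pnorm p (c • x) = |c| * pnorm p x := by
  rw [pnorm, WithLp.equiv_symm_apply, WithLp.toLp_smul, norm_smul, Real.norm_eq_abs, pnorm,
    WithLp.equiv_symm_apply]

lemma pnorm_single (i : Fin d) (c : ℝ) : pnorm p (Pi.single i c) = |c| := by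
  rw [pnorm, WithLp.equiv_symm_apply, PiLp.norm_toLp_single, Real.norm_eq_abs]

lemma pnorm_two_eq (x : Fin d → ℝ) : pnorm 2 x = Real.sqrt (∑ i, x i ^ 2) := by
  rw [pnorm, EuclideanSpace.norm_eq]
  simp [WithLp.equiv_symm_apply, PiLp.toLp_apply, Real.norm_eq_abs, sq_abs]

lemma pnorm_eq (hp : p ≠ ∞) (x : Fin d → ℝ) :
    pnorm p x = (∑ i, |x i| ^ p.toReal) ^ (1 / p.toReal) := by
  have hp0 : 0 < p.toReal :=
    ENNReal.toReal_pos (zero_lt_one.trans_le (Fact.out : 1 ≤ p)).ne' hp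
  rw [pnorm, PiLp.norm_eq_sum hp0]
  simp [WithLp.equiv_symm_apply, PiLp.toLp_apply, Real.norm_eq_abs]

lemma pnorm_top_eq (x : Fin d → ℝ) [Fact (1 ≤ (⊤ : ℝ≥0∞))] :
    pnorm ⊤ x = ⨆ i, |x i| := by
  rw [pnorm, PiLp.norm_eq_ciSup]
  simp [WithLp.equiv_symm_apply, PiLp.toLp_apply, Real.norm_eq_abs]

end helpers

theorem subgradient_angle_bound {d : ℕ} (p : ℝ≥0∞) [Fact (1 ≤ p)]
    (z : Fin d → ℝ) (hz : pnorm p z = 1) (u : Fin d → ℝ)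
    (hu : ∀ w : Fin d → ℝ, ∑ i, u i * (w i - z i) ≤ pnorm p w - pnorm p z) :
    1 / Real.sqrt d ≤ (∑ i, u i * z i) / (pnorm 2 u * pnorm 2 z) ∧
      Real.arccos ((∑ i, u i * z i) / (pnorm 2 u * pnorm 2 z)) ≤
        Real.pi / 2 - 1 / Real.sqrt d := by
  have hp1 : (1 : ℝ≥0∞) ≤ p := Fact.out
  -- ⟨u, z⟩ = 1
  have huz : ∑ i, u i * z i = 1 := by
    have h0 := hu 0
    have h2 := hu ((2 : ℝ) • z)
    rw [pnorm_zero, hz] at h0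
    rw [pnorm_smul, hz] at h2
    simp only [Pi.zero_apply, zero_sub, mul_neg, Finset.sum_neg_distrib] at h0
    have h0' : 1 ≤ ∑ i, u i * z i := by linarith
    have h2' : ∑ i, u i * ((2 : ℝ) * z i - z i) = ∑ i, u i * z i := by
      apply Finset.sum_congr rfl; intro i _; ring
    simp only [Pi.smul_apply, smul_eq_mul] at h2
    rw [h2'] at h2
    have h22 : |(2:ℝ)| = 2 := by norm_num
    rw [h22] at h2
    linarith
  -- subgradient gives linear bound
  have key : ∀ w : Fin d → ℝ, ∑ i, u i * w i ≤ pnorm p w := by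
    intro w
    have h := hu w
    rw [hz] at h
    have e : ∑ i, u i * (w i - z i) = ∑ i, u i * w i - ∑ i, u i * z i := by
      rw [← Finset.sum_sub_distrib]; apply Finset.sum_congr rfl; intro i _; ring
    rw [e, huz] at h
    linarith
  have hd : 0 < d := by
    by_contra h
    push_neg at h
    interval_cases d
    · simp at huz
  -- |u i| ≤ 1 for all i
  have habsu : ∀ i, |u i| ≤ 1 := by
    intro i
    have hpos := key (Pi.single i 1)
    have hneg := key (Pi.single i (-1))
    rw [pnorm_single] at hpos hneg
    have e1 : ∀ c : ℝ, ∑ j, u j * (Pi.single i c : Fin d → ℝ) j = u i * c := by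
      intro c
      rw [Finset.sum_eq_single i]
      · simp
      · intro j _ hj; simp [Pi.single_eq_of_ne hj]
      · simp
    rw [e1] at hpos hneg
    norm_num at hpos hneg
    rw [abs_le]
    exact ⟨by linarith, hpos⟩
  -- 2-norm quantities
  have hSu_eq : pnorm 2 u = Real.sqrt (∑ i, u i ^ 2) := pnorm_two_eq u
  have hSz_eq : pnorm 2 z = Real.sqrt (∑ i, z i ^ 2) := pnorm_two_eq z
  set Su := pnorm 2 u with hSu
  set Sz := pnorm 2 z with hSz
  have husq_nonneg : (0:ℝ) ≤ ∑ i, u i ^ 2 := Finset.sum_nonneg fun i _ => sq_nonneg _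
  have hzsq_nonneg : (0:ℝ) ≤ ∑ i, z i ^ 2 := Finset.sum_nonneg fun i _ => sq_nonneg _
  have hSu_nonneg : 0 ≤ Su := hSu_eq ▸ Real.sqrt_nonneg _
  have hSz_nonneg : 0 ≤ Sz := hSz_eq ▸ Real.sqrt_nonneg _
  have husq_pos : 0 < ∑ i, u i ^ 2 := by
    rcases husq_nonneg.lt_or_eq with h | h
    · exact h
    · exfalso
      have hall : ∀ i ∈ Finset.univ, u i ^ 2 = 0 := by
        intro i _
        have := (Finset.sum_eq_zero_iff_of_nonneg (fun i _ => sq_nonneg (u i))).mp h.symm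
        exact this i (Finset.mem_univ i)
      have : ∑ i, u i * z i = 0 := by
        apply Finset.sum_eq_zero
        intro i hi
        have : u i = 0 := by have h2 := hall i hi; exact sq_eq_zero_iff.mp h2
        simp [this]
      rw [huz] at this; norm_num at this
  have hzsq_pos : 0 < ∑ i, z i ^ 2 := by
    rcases hzsq_nonneg.lt_or_eq with h | h
    · exact h
    · exfalso
      have hzero : z = 0 := by
        funext i
        have hall := (Finset.sum_eq_zero_iff_of_nonneg (fun i _ => sq_nonneg (z i))).mp h.symm
        exact sq_eq_zero_iff.mp (hall i (Finset.mem_univ i))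
      rw [hzero, pnorm_zero] at hz; norm_num at hz
  have hSu_pos : 0 < Su := by rw [hSu_eq]; exact Real.sqrt_pos.mpr husq_pos
  have hSz_pos : 0 < Sz := by rw [hSz_eq]; exact Real.sqrt_pos.mpr hzsq_pos
  have habsuS : ∀ i, |u i| ≤ Su := by
    intro i
    rw [hSu_eq, ← Real.sqrt_sq_eq_abs]
    exact Real.sqrt_le_sqrt (Finset.single_le_sum (fun j _ => sq_nonneg (u j)) (Finset.mem_univ i))
  have hSu_led : Su ≤ Real.sqrt d := by
    rw [hSu_eq]
    apply Real.sqrt_le_sqrt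
    calc ∑ i, u i ^ 2 ≤ ∑ _i : Fin d, (1:ℝ) := by
          apply Finset.sum_le_sum
          intro i _
          have := habsu i
          nlinarith [abs_nonneg (u i), sq_abs (u i)]
      _ = d := by simp
  have huu : ∑ i, u i ^ 2 ≤ pnorm p u := by
    have := key u
    calc ∑ i, u i ^ 2 = ∑ i, u i * u i := by apply Finset.sum_congr rfl; intro i _; ring
      _ ≤ pnorm p u := key u
  -- main product bound, by cases on p
  have hprod : Su * Sz ≤ Real.sqrt d := by
    by_cases hp : p = ⊤
    · subst hp
      -- z is bounded by 1 coordinatewise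
      rw [pnorm_top_eq] at hz
      have hzb : ∀ i, |z i| ≤ 1 := by
        intro i
        rw [← hz]
        exact le_ciSup (Set.Finite.bddAbove (Set.finite_range fun j => |z j|)) i
      have hSz_led : Sz ≤ Real.sqrt d := by
        rw [hSz_eq]
        apply Real.sqrt_le_sqrt
        calc ∑ i, z i ^ 2 ≤ ∑ _i : Fin d, (1:ℝ) := by
              apply Finset.sum_le_sum
              intro i _
              have := hzb i
              nlinarith [abs_nonneg (z i), sq_abs (z i)]
          _ = d := by simp
      have hup : pnorm ⊤ u ≤ Su := by
        rw [pnorm_top_eq]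
        haveI : Nonempty (Fin d) := Fin.pos_iff_nonempty.mp hd
        exact ciSup_le habsuS
      have hSu1 : Su ≤ 1 := by
        have h1 : Su ^ 2 ≤ Su := by
          have e : Su ^ 2 = ∑ i, u i ^ 2 := by rw [hSu_eq, Real.sq_sqrt husq_nonneg]
          rw [e]; exact le_trans huu hup
        have h2 : Su * Su ≤ Su * 1 := by rw [mul_one, ← sq]; exact h1
        exact le_of_mul_le_mul_left h2 hSu_pos
      calc Su * Sz ≤ 1 * Real.sqrt d := mul_le_mul hSu1 hSz_led hSz_nonneg zero_le_one
        _ = Real.sqrt d := one_mul _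
    · -- p finite
      set pr := p.toReal with hpr
      have hpr1 : 1 ≤ pr := by
        rw [hpr, ← ENNReal.toReal_one]
        exact ENNReal.toReal_mono hp hp1
      have hpr0 : 0 < pr := lt_of_lt_of_le one_pos hpr1
      rw [pnorm_eq p hp] at hz
      have hzsum : ∑ i, |z i| ^ pr = 1 := by
        have h0 : (0:ℝ) ≤ ∑ i, |z i| ^ pr :=
          Finset.sum_nonneg fun i _ => Real.rpow_nonneg (abs_nonneg _) _
        have := congrArg (· ^ pr) hz
        beta_reduce at this
        rwa [← Real.rpow_mul h0, one_div_mul_cancel hpr0.ne', Real.rpow_one,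
          Real.one_rpow] at this
      have hzb : ∀ i, |z i| ≤ 1 := by
        intro i
        by_contra hgt
        push_neg at hgt
        have : (1:ℝ) < |z i| ^ pr := by
          calc (1:ℝ) = 1 ^ pr := (Real.one_rpow pr).symm
            _ < |z i| ^ pr := Real.rpow_lt_rpow (by norm_num) hgt hpr0
        have hle : |z i| ^ pr ≤ ∑ j, |z j| ^ pr :=
          Finset.single_le_sum (fun j _ => Real.rpow_nonneg (abs_nonneg _) _)
            (Finset.mem_univ i)
        rw [hzsum] at hle
        linarith
      rcases le_or_gt pr 2 with hpr2 | hpr2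
      · -- case 1 ≤ pr ≤ 2 : Sz ≤ 1, Su ≤ √d
        have hz2 : ∑ i, z i ^ 2 ≤ 1 := by
          rw [← hzsum]
          apply Finset.sum_le_sum
          intro i _
          rcases eq_or_ne (z i) 0 with h | h
          · simp [h, Real.zero_rpow hpr0.ne']
          · have habs : 0 < |z i| := abs_pos.mpr h
            have : |z i| ^ (2:ℝ) ≤ |z i| ^ pr :=
              Real.rpow_le_rpow_of_exponent_ge habs (hzb i) hpr2
            calc z i ^ 2 = |z i| ^ (2:ℝ) := by
                  rw [Real.rpow_two, sq_abs]
              _ ≤ |z i| ^ pr := this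
        have hSz1 : Sz ≤ 1 := by
          rw [hSz_eq, show (1:ℝ) = Real.sqrt 1 by simp]
          exact Real.sqrt_le_sqrt hz2
        calc Su * Sz ≤ Real.sqrt d * 1 := mul_le_mul hSu_led hSz1 hSz_nonneg (Real.sqrt_nonneg _)
          _ = Real.sqrt d := mul_one _
      · -- case 2 < pr : Su ≤ 1, Sz ≤ √d
        have hSz_led : Sz ≤ Real.sqrt d := by
          rw [hSz_eq]
          apply Real.sqrt_le_sqrt
          calc ∑ i, z i ^ 2 ≤ ∑ _i : Fin d, (1:ℝ) := by
                apply Finset.sum_le_sum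
                intro i _
                have := hzb i
                nlinarith [abs_nonneg (z i), sq_abs (z i)]
            _ = d := by simp
        have hSusq : Su ^ (2:ℝ) = ∑ i, u i ^ 2 := by
          rw [Real.rpow_two, hSu_eq, Real.sq_sqrt husq_nonneg]
        have hupr : ∑ i, |u i| ^ pr ≤ Su ^ pr := by
          have hpt : ∀ i, |u i| ^ pr ≤ Su ^ (pr - 2) * u i ^ 2 := by
            intro i
            rcases eq_or_ne (u i) 0 with h | h
            · simp only [h, abs_zero, Real.zero_rpow hpr0.ne']
              positivity
            · have habs : 0 < |u i| := abs_pos.mpr h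
              have e : |u i| ^ pr = |u i| ^ (pr - 2) * |u i| ^ (2:ℝ) := by
                rw [← Real.rpow_add habs]; ring_nf
              rw [e, Real.rpow_two, sq_abs]
              apply mul_le_mul_of_nonneg_right _ (sq_nonneg _)
              exact Real.rpow_le_rpow (abs_nonneg _) (habsuS i) (by linarith)
          calc ∑ i, |u i| ^ pr ≤ ∑ i, Su ^ (pr - 2) * u i ^ 2 :=
                Finset.sum_le_sum fun i _ => hpt i
            _ = Su ^ (pr - 2) * ∑ i, u i ^ 2 := by rw [← Finset.mul_sum]
            _ = Su ^ (pr - 2) * Su ^ (2:ℝ) := by rw [hSusq]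
            _ = Su ^ pr := by rw [← Real.rpow_add hSu_pos]; ring_nf
        have hple : pnorm p u ≤ Su := by
          rw [pnorm_eq p hp]
          have h1 : (∑ i, |u i| ^ pr) ^ (1/pr) ≤ (Su ^ pr) ^ (1/pr) :=
            Real.rpow_le_rpow
              (Finset.sum_nonneg fun i _ => Real.rpow_nonneg (abs_nonneg _) _) hupr
              (by positivity)
          rwa [← Real.rpow_mul hSu_nonneg, mul_one_div_cancel hpr0.ne',
            Real.rpow_one] at h1
        have hSu1 : Su ≤ 1 := by
          have h1 : Su ^ 2 ≤ Su := by
            have e : Su ^ 2 = ∑ i, u i ^ 2 := by rw [hSu_eq, Real.sq_sqrt husq_nonneg]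
            rw [e]; exact le_trans huu hple
          have h2 : Su * Su ≤ Su * 1 := by rw [mul_one, ← sq]; exact h1
          exact le_of_mul_le_mul_left h2 hSu_pos
        calc Su * Sz ≤ 1 * Real.sqrt d := mul_le_mul hSu1 hSz_led hSz_nonneg zero_le_one
          _ = Real.sqrt d := one_mul _
  -- conclude
  have hrtd : 0 < Real.sqrt d := Real.sqrt_pos.mpr (by exact_mod_cast hd)
  have hSS : 0 < Su * Sz := mul_pos hSu_pos hSz_pos
  rw [huz]
  have goal1 : 1 / Real.sqrt d ≤ 1 / (Su * Sz) := one_div_le_one_div_of_le hSS hprod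
  refine ⟨goal1, ?_⟩
  have hd1 : 1 ≤ Real.sqrt d := by
    rw [show (1:ℝ) = Real.sqrt 1 by simp]
    exact Real.sqrt_le_sqrt (by exact_mod_cast hd)
  have hx0 : (0:ℝ) ≤ 1 / Real.sqrt d := by positivity
  have hx1 : 1 / Real.sqrt d ≤ 1 := by
    rw [div_le_one hrtd]; exact hd1
  have harc : 1 / Real.sqrt d ≤ Real.arcsin (1 / Real.sqrt d) := by
    conv_lhs => rw [← Real.sin_arcsin (by linarith) hx1]
    exact Real.sin_le (Real.arcsin_nonneg.mpr hx0)
  have hmono : Real.arcsin (1 / Real.sqrt d) ≤ Real.arcsin (1 / (Su * Sz)) :=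
    Real.monotone_arcsin goal1
  rw [Real.arccos_eq_pi_div_two_sub_arcsin]
  linarith
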